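/- Let q : ℝ → ℝ be defined by q(u) = (1/2)·(1 − u/(1 + π²(u−1)²)) if u < 1 and q(u) = −u/(2(1 + π²(u−1)²)) if u ≥ 1. Let a, b : ℕ → ℝ and u : ℕ → ℝ be sequences satisfying the recurrence a_t = (1/2)·b_t + q(u_{t−1})·a_{t−1} for all t ≥ 1. Then for every t ≥ 1, |a_t − (1/2)·∑_{i=0}^{t−1} (∏_{j=1}^{i} q(u_{t−j}))·b_{t−i}| ≤ (13/25)^t · |a_0| (where the empty product equals 1). In particular, the deviation of a_t from the current-driven sum tends to 0 as t → ∞. -/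

import Mathlib

lemma lif_q_abs_bound (q : ℝ → ℝ)
    (hq : ∀ u : ℝ, q u =
      if u < 1 then (1/2) * (1 - u / (1 + Real.pi ^ 2 * (u - 1) ^ 2))
      else -u / (2 * (1 + Real.pi ^ 2 * (u - 1) ^ 2))) :
    ∀ v : ℝ, |q v| ≤ 13/25 := by
  intro v
  have hpi : (9:ℝ) ≤ Real.pi ^ 2 := by nlinarith [Real.pi_gt_three]
  set d : ℝ := 1 + Real.pi ^ 2 * (v - 1) ^ 2 with hd
  have hd1 : (1:ℝ) ≤ d := by nlinarith [sq_nonneg (v-1), sq_nonneg Real.pi]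
  have hd0 : (0:ℝ) < d := by linarith
  rw [hq, abs_le]
  by_cases hv : v < 1
  · simp only [if_pos hv]
    have h1 : v / d ≤ 1 := by
      rw [div_le_one hd0]; linarith
    have h2 : (-1/25 : ℝ) ≤ v / d := by
      rw [le_div_iff₀ hd0]
      nlinarith [sq_nonneg (v - 1 + 25/18), sq_nonneg (v-1)]
    constructor <;> nlinarith
  · simp only [if_neg hv]
    push_neg at hv
    have h1 : v / (2*d) ≤ 13/25 := by
      rw [div_le_iff₀ (by linarith)]
      nlinarith [sq_nonneg (v - 1 - 25/468), sq_nonneg (v-1)]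
    have h2 : 0 ≤ v / (2*d) := by positivity
    constructor
    · have : -v/(2*d) = -(v/(2*d)) := by ring
      rw [this]; linarith
    · have : -v/(2*d) = -(v/(2*d)) := by ring
      rw [this]; linarith

lemma lif_sum_step (q : ℝ → ℝ) (b u : ℕ → ℝ) (t : ℕ) :
    (∑ i ∈ Finset.range (t+1), (∏ j ∈ Finset.Icc 1 i, q (u (t+1-j))) * b (t+1-i))
      = b (t+1) + q (u t) * ∑ i ∈ Finset.range t,
          (∏ j ∈ Finset.Icc 1 i, q (u (t-j))) * b (t-i) := by
  rw [Finset.sum_range_succ']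
  have h0 : (∏ j ∈ Finset.Icc 1 0, q (u (t+1-j))) * b (t+1-0) = b (t+1) := by simp
  rw [h0, Finset.mul_sum, add_comm]
  congr 1
  apply Finset.sum_congr rfl
  intro i hi
  have hb : t + 1 - (i+1) = t - i := by omega
  rw [hb]
  have hp : (∏ j ∈ Finset.Icc 1 (i+1), q (u (t+1-j)))
      = q (u t) * ∏ j ∈ Finset.Icc 1 i, q (u (t-j)) := by
    rw [← Finset.Ico_add_one_right_eq_Icc, ← Finset.Ico_add_one_right_eq_Icc,
      Finset.prod_Ico_eq_prod_range, Finset.prod_Ico_eq_prod_range]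
    rw [show i + 1 + 1 - 1 = i + 1 from rfl, show i + 1 - 1 = i from rfl,
      Finset.prod_range_succ']
    rw [mul_comm]
    congr 1
    apply Finset.prod_congr rfl
    intro k _
    congr 2
    omega
  rw [hp, mul_assoc]

theorem lif_gradient_mainly_current_driven
    (q : ℝ → ℝ)
    (hq : ∀ u : ℝ, q u =
      if u < 1 then (1/2) * (1 - u / (1 + Real.pi ^ 2 * (u - 1) ^ 2))
      else -u / (2 * (1 + Real.pi ^ 2 * (u - 1) ^ 2)))
    (a b u : ℕ → ℝ)
    (hrec : ∀ t : ℕ, 1 ≤ t → a t = (1/2) * b t + q (u (t - 1)) * a (t - 1)) :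
    (∀ t : ℕ, 1 ≤ t →
      |a t - (1/2) * ∑ i ∈ Finset.range t,
          (∏ j ∈ Finset.Icc 1 i, q (u (t - j))) * b (t - i)| ≤
        (13 / 25 : ℝ) ^ t * |a 0|) ∧
    Filter.Tendsto
      (fun t : ℕ => a t - (1/2) * ∑ i ∈ Finset.range t,
          (∏ j ∈ Finset.Icc 1 i, q (u (t - j))) * b (t - i))
      Filter.atTop (nhds 0) := by
  have hqb := lif_q_abs_bound q hq
  set D : ℕ → ℝ := fun t => a t - (1/2) * ∑ i ∈ Finset.range t,
      (∏ j ∈ Finset.Icc 1 i, q (u (t - j))) * b (t - i) with hD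
  have hD0 : D 0 = a 0 := by simp [hD]
  have hstep : ∀ t : ℕ, D (t+1) = q (u t) * D t := by
    intro t
    have ha : a (t+1) = (1/2) * b (t+1) + q (u t) * a t := by
      have := hrec (t+1) (by omega)
      simpa using this
    simp only [hD]
    rw [ha, lif_sum_step q b u t]
    ring
  have hbound : ∀ t : ℕ, |D t| ≤ (13/25 : ℝ) ^ t * |a 0| := by
    intro t
    induction t with
    | zero => simp [hD0]
    | succ n ih =>
      rw [hstep n, abs_mul, pow_succ]
      calc |q (u n)| * |D n| ≤ (13/25) * ((13/25:ℝ)^n * |a 0|) := by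
            apply mul_le_mul (hqb _) ih (abs_nonneg _)
            norm_num
        _ = (13/25:ℝ)^n * (13/25) * |a 0| := by ring
  constructor
  · intro t _; exact hbound t
  · apply squeeze_zero_norm (fun t => by simpa using hbound t)
    have : Filter.Tendsto (fun t : ℕ => (13/25:ℝ)^t) Filter.atTop (nhds 0) := by
      apply tendsto_pow_atTop_nhds_zero_of_lt_one <;> norm_num
    simpa using this.mul_const |a 0|
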